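/- For every k ∈ ℕ and every positive half-integer m (i.e. m = M + 1/2 with M ∈ ℕ): (k+1)·p̃_{k+1}(m) = (m−k−1/2)·p̃_k(m) + Σ_{j} 2j·p̃_k(j), where the sum runs over all half-integers j with 0 < j < m; equivalently, (k+1)·p̃_{k+1}(M+1/2) = (M−k)·p̃_k(M+1/2) + Σ_{J=0}^{M−1} (2J+1)·p̃_k(J+1/2). -/

import Mathlib

/-- Generalized binomial coefficient `binom(x,k) = x(x-1)⋯(x-k+1)/k!`. -/
def qbinom (x : ℚ) (k : ℕ) : ℚ := (∏ i ∈ Finset.range k, (x - i)) / (Nat.factorial k)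

/-- `p̃_k(m) = binom(m-1/2,k)·binom(m+k-1/2,k)`. -/
def ptilde (k : ℕ) (m : ℚ) : ℚ := qbinom (m - 1/2) k * qbinom (m + k - 1/2) k

lemma qbinom_shift (y : ℚ) (k : ℕ) :
    (y + 1 - k) * qbinom (y + 1) k = (y + 1) * qbinom y k := by
  have h : (y + 1 - k) * ∏ i ∈ Finset.range k, (y + 1 - i)
      = (y + 1) * ∏ i ∈ Finset.range k, (y - i) := by
    have h1 := Finset.prod_range_succ (fun i : ℕ => y + 1 - (i : ℚ)) k
    have h2 := Finset.prod_range_succ' (fun i : ℕ => y + 1 - (i : ℚ)) k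
    have h3 : ∀ i ∈ Finset.range k, (y + 1 - ((i : ℚ) + 1)) = y - i := by
      intro i _; ring
    simp only [Nat.cast_add, Nat.cast_one, Nat.cast_zero] at h1 h2
    rw [Finset.prod_congr rfl h3] at h2
    calc (y + 1 - k) * ∏ i ∈ Finset.range k, (y + 1 - i)
        = ∏ i ∈ Finset.range (k + 1), (y + 1 - (i : ℚ)) := by rw [h1]; ring
      _ = (y + 1) * ∏ i ∈ Finset.range k, (y - i) := by rw [h2]; ring_nf
  unfold qbinom
  have hk : (Nat.factorial k : ℚ) ≠ 0 := by positivity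
  field_simp
  linear_combination h

lemma qbinom_succ (x : ℚ) (k : ℕ) :
    ((k : ℚ) + 1) * qbinom x (k + 1) = (x - k) * qbinom x k := by
  unfold qbinom
  rw [Finset.prod_range_succ, Nat.factorial_succ]
  have hk : (Nat.factorial k : ℚ) ≠ 0 := by positivity
  push_cast
  field_simp

lemma qbinom_mid (x : ℚ) (k : ℕ) :
    (x + 1/2) * qbinom (x + k + 1/2) k = (x + k + 1/2) * qbinom (x + k - 1/2) k := by
  have h := qbinom_shift (x + k - 1/2) k
  have e : x + (k : ℚ) - 1/2 + 1 = x + k + 1/2 := by ring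
  rw [e] at h
  linear_combination h

lemma ptE (k : ℕ) (x : ℚ) :
    ((k : ℚ) + 1) * (((k : ℚ) + 1) * ptilde (k + 1) x)
      = (x - 1/2 - k) * (x + k + 1/2) * ptilde k x := by
  unfold ptilde
  have e1 : x + ((k + 1 : ℕ) : ℚ) - 1/2 = x + k + 1/2 := by push_cast; ring
  rw [e1]
  have h1 := qbinom_succ (x - 1/2) k
  have h2 := qbinom_succ (x + k + 1/2) k
  have h3 := qbinom_mid x k
  have e2 : x + (k : ℚ) + 1/2 - k = x + 1/2 := by ring
  rw [e2] at h2
  linear_combination ((k : ℚ) + 1) * qbinom (x + k + 1/2) (k + 1) * h1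
    + (x - 1/2 - k) * qbinom (x - 1/2) k * h2
    + (x - 1/2 - k) * qbinom (x - 1/2) k * h3

lemma ptD (k : ℕ) (x : ℚ) :
    (x + 1/2) * ((x + 1/2 - k) * ptilde k (x + 1))
      = (x + 1/2) * ((x + 1/2 + k) * ptilde k x) := by
  unfold ptilde
  have e1 : x + 1 - 1/2 = x + 1/2 := by ring
  have e2 : x + 1 + (k : ℚ) - 1/2 = x + k + 1/2 := by ring
  rw [e1, e2]
  have hA := qbinom_shift (x - 1/2) k
  have e3 : x - 1/2 + 1 = x + 1/2 := by ring
  rw [e3] at hA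
  have h3 := qbinom_mid x k
  linear_combination (x + 1/2) * qbinom (x + k + 1/2) k * hA
    + (x + 1/2) * qbinom (x - 1/2) k * h3

lemma ptStep (k : ℕ) (x : ℚ) :
    ((k : ℚ) + 1) * ptilde (k + 1) (x + 1)
      = ((k : ℚ) + 1) * ptilde (k + 1) x
        + (x + 1/2 - k) * ptilde k (x + 1) + (x + 1/2 + k) * ptilde k x := by
  have hk : ((k : ℚ) + 1) ≠ 0 := by positivity
  apply mul_left_cancel₀ hk
  linear_combination ptE k (x + 1) - ptE k x + ptD k x

/-- String-type recursion for `p̃_k` at positive half-integer values `m = M + 1/2`: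
`(k+1)·p̃_{k+1}(m) = (m-k-1/2)·p̃_k(m) + Σ_{0<j<m, j half-integer} 2j·p̃_k(j)`. -/
theorem stmt4 (k M : ℕ) :
    (k + 1 : ℚ) * ptilde (k + 1) ((M : ℚ) + 1/2) =
      ((M : ℚ) - k) * ptilde k ((M : ℚ) + 1/2) +
        ∑ J ∈ Finset.range M, (2 * (J : ℚ) + 1) * ptilde k ((J : ℚ) + 1/2) := by
  induction M with
  | zero =>
    simp only [Nat.cast_zero, Finset.range_zero, Finset.sum_empty, add_zero]
    have hk : ((k : ℚ) + 1) ≠ 0 := by positivity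
    apply mul_left_cancel₀ hk
    have h0 : (0 : ℚ) + 1/2 = 1/2 := by ring
    rw [h0]
    linear_combination ptE k (1/2)
  | succ M ih =>
    rw [Finset.sum_range_succ]
    push_cast
    have h := ptStep k ((M : ℚ) + 1/2)
    have e : (M : ℚ) + 1/2 + 1 = (M : ℚ) + 1 + 1/2 := by ring
    rw [e] at h
    linear_combination ih + h
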